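/- Let d ≥ 2 and suppose K ⊆ 𝕋 is compact, nonempty, g_d-invariant (g_d(K) ⊆ K, where g_d(z) = conj(z)^d). Then the smallest closed arc containing K contains a fixed point of g_d (i.e., a (d+1)-st root of unity). -/

import Mathlib

/-- The closed circular arc of the unit circle starting at angle `a` and of
arc length `ℓ`. -/
def circleArc (a ℓ : ℝ) : Set ℂ :=
  (fun θ : ℝ => Complex.exp (θ * Complex.I)) '' Set.Icc a (a + ℓ)

/-- Let `d ≥ 2` and `K ⊆ 𝕋` be compact, nonempty and invariant under
`g_d(z) = conj(z)^d`. Then the smallest closed arc containing `K` contains a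
fixed point of `g_d`, i.e. a `(d+1)`-st root of unity. -/
theorem smallest_arc_contains_fixed_point (d : ℕ) (hd : 2 ≤ d)
    (K : Set ℂ) (hKcirc : K ⊆ {z : ℂ | ‖z‖ = 1})
    (hKne : K.Nonempty) (hKcomp : IsCompact K)
    (hinv : ∀ z ∈ K, (starRingEnd ℂ z) ^ d ∈ K)
    (a ℓ : ℝ) (hℓ0 : 0 ≤ ℓ) (harc : K ⊆ circleArc a ℓ)
    (hmin : ∀ a' ℓ' : ℝ, 0 ≤ ℓ' → K ⊆ circleArc a' ℓ' → ℓ ≤ ℓ') :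
    ∃ z ∈ circleArc a ℓ, z ^ (d + 1) = 1 := by
  classical
  set S : Set ℝ := Set.Icc a (a + ℓ) ∩ (fun θ : ℝ => Complex.exp (θ * Complex.I)) ⁻¹' K
    with hSdef
  have hSne : S.Nonempty := by
    obtain ⟨z, hz⟩ := hKne
    obtain ⟨θ, hθ, hθz⟩ := harc hz
    exact ⟨θ, hθ, by simpa [hθz] using hz⟩
  have hSclosed : IsClosed S :=
    isClosed_Icc.inter (hKcomp.isClosed.preimage (by continuity))
  have hSbdb : BddBelow S := ⟨a, fun θ hθ => hθ.1.1⟩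
  have hSbda : BddAbove S := ⟨a + ℓ, fun θ hθ => hθ.1.2⟩
  set α := sInf S with hα
  set β := sSup S with hβ
  have hαS : α ∈ S := hSclosed.csInf_mem hSne hSbdb
  have hβS : β ∈ S := hSclosed.csSup_mem hSne hSbda
  have hαβ : α ≤ β := le_csSup hSbda hαS
  have hsub : K ⊆ circleArc α (β - α) := by
    intro z hz
    obtain ⟨θ, hθ, hθz⟩ := harc hz
    have hθS : θ ∈ S := ⟨hθ, by simpa [hθz] using hz⟩
    exact ⟨θ, ⟨csInf_le hSbdb hθS, by linarith [le_csSup hSbda hθS]⟩, hθz⟩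
  have h1 : ℓ ≤ β - α := hmin α (β - α) (by linarith) hsub
  have haα : a ≤ α := hαS.1.1
  have hβa : β ≤ a + ℓ := hβS.1.2
  have hαa : α = a := by linarith
  have haK : Complex.exp ((a : ℂ) * Complex.I) ∈ K := by
    have := hαS.2
    rw [hαa] at this
    exact this
  have hgK : Complex.exp ((-(d : ℝ) * a : ℝ) * Complex.I) ∈ K := by
    have h := hinv _ haK
    have hconj : (starRingEnd ℂ (Complex.exp ((a : ℂ) * Complex.I))) ^ d
        = Complex.exp ((-(d : ℝ) * a : ℝ) * Complex.I) := by
      rw [← Complex.exp_conj]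
      rw [← Complex.exp_nat_mul]
      congr 1
      simp [Complex.conj_I]
      push_cast
      ring
    rwa [hconj] at h
  obtain ⟨s, hs, hse⟩ := harc hgK
  obtain ⟨n, hn⟩ := Complex.exp_eq_exp_iff_exists_int.mp hse
  have hsr : s = -(d : ℝ) * a + n * (2 * Real.pi) := by
    have h2 := congrArg Complex.im hn
    simpa using h2
  have hd1 : (0 : ℝ) < (d : ℝ) + 1 := by positivity
  refine ⟨Complex.exp ((2 * Real.pi * n / ((d : ℝ) + 1) : ℝ) * Complex.I),
    ⟨2 * Real.pi * n / ((d : ℝ) + 1), ⟨?_, ?_⟩, rfl⟩, ?_⟩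
  · rw [le_div_iff₀ hd1]
    have := hs.1
    nlinarith [this]
  · rw [div_le_iff₀ hd1]
    have h2 := hs.2
    have hdl : ℓ ≤ ((d : ℝ) + 1) * ℓ := by nlinarith [Nat.cast_nonneg (α := ℝ) d]
    nlinarith
  · have hre : ((d : ℝ) + 1) * (2 * Real.pi * n / ((d : ℝ) + 1)) = n * (2 * Real.pi) := by
      field_simp
    rw [← Complex.exp_nat_mul]
    have hkey : ((d + 1 : ℕ) : ℂ) * (((2 * Real.pi * n / ((d : ℝ) + 1) : ℝ)) * Complex.I)
        = (((n : ℝ) * (2 * Real.pi) : ℝ) : ℂ) * Complex.I := by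
      rw [← hre]; push_cast; ring
    rw [hkey]
    push_cast
    rw [show ((n : ℂ) * (2 * (Real.pi : ℂ))) * Complex.I
        = (n : ℂ) * (2 * (Real.pi : ℂ) * Complex.I) by ring]
    exact Complex.exp_int_mul_two_pi_mul_I n
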